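/- Let T : ℝ → M₃(ℝ) be differentiable with T(t)·T(t)ᵀ = I for all t, let h₁, h₂, h₃ : ℝ → ℝ be differentiable and nowhere zero, H(t) = diag(h₁(t), h₂(t), h₃(t)), M(t) = Ṫ(t)T(t)⁻¹ + T(t)Ḣ(t)H(t)⁻¹T(t)⁻¹, let w : ℝ → ℝ³ be differentiable, let e ≠ 0 be real, and define the vector potential A(t,x) = (1/(2e))·(M(t)(x − w(t)) + ẇ(t)) ∈ ℝ³. Then for every t and all j, k ∈ {1,2,3}, the function x ↦ ∂A_k/∂x_j (t,x) − ∂A_j/∂x_k (t,x) is constant on ℝ³ with value (1/e)·(Ṫ(t)T(t)ᵀ)_{kj}; in particular the magnetic field rot A is independent of the spatial variables and of h₁, h₂, h₃, and it vanishes identically if and only if Ṫ(t) = 0 for all t. -/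

import Mathlib

open Matrix

/-- Entrywise derivative of a matrix-valued function of a real variable. -/
noncomputable def matDeriv (T : ℝ → Matrix (Fin 3) (Fin 3) ℝ) (t : ℝ) :
    Matrix (Fin 3) (Fin 3) ℝ :=
  Matrix.of fun i j => deriv (fun s => T s i j) t

/-- For the vector potential `A(t,x) = (1/(2e))(M(t)(x − w(t)) + ẇ(t))` with
`M(t) = Ṫ(t)T(t)⁻¹ + T(t)Ḣ(t)H(t)⁻¹T(t)⁻¹`, the magnetic field components
`∂A_k/∂x_j − ∂A_j/∂x_k` are constant in `x` with value `(1/e)(Ṫ(t)T(t)ᵀ)_{kj}`;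
in particular the magnetic field vanishes identically iff `Ṫ(t) = 0` for all `t`. -/
theorem magnetic_field_of_separable_potential
    (T : ℝ → Matrix (Fin 3) (Fin 3) ℝ)
    (hT : ∀ i j, Differentiable ℝ fun t => T t i j)
    (hTorth : ∀ t, T t * (T t)ᵀ = 1)
    (h : Fin 3 → ℝ → ℝ)
    (hh : ∀ a, Differentiable ℝ (h a))
    (hne : ∀ a t, h a t ≠ 0)
    (H : ℝ → Matrix (Fin 3) (Fin 3) ℝ)
    (hH : H = fun t => Matrix.diagonal fun a => h a t)
    (M : ℝ → Matrix (Fin 3) (Fin 3) ℝ)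
    (hM : M = fun t =>
      matDeriv T t * (T t)⁻¹ + T t * matDeriv H t * (H t)⁻¹ * (T t)⁻¹)
    (w : Fin 3 → ℝ → ℝ)
    (hw : ∀ a, Differentiable ℝ (w a))
    (e : ℝ) (he : e ≠ 0)
    (A : ℝ → (Fin 3 → ℝ) → Fin 3 → ℝ)
    (hA : A = fun t x =>
      (1 / (2 * e)) • (M t *ᵥ (x - fun a => w a t) + fun a => deriv (w a) t)) :
    (∀ (t : ℝ) (x : Fin 3 → ℝ) (j k : Fin 3),
      fderiv ℝ (fun y => A t y k) x (Pi.single j 1) -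
        fderiv ℝ (fun y => A t y j) x (Pi.single k 1) =
      (1 / e) * (matDeriv T t * (T t)ᵀ) k j) ∧
    ((∀ (t : ℝ) (x : Fin 3 → ℝ) (j k : Fin 3),
      fderiv ℝ (fun y => A t y k) x (Pi.single j 1) -
        fderiv ℝ (fun y => A t y j) x (Pi.single k 1) = 0) ↔
      ∀ t : ℝ, matDeriv T t = 0) := by
  subst hA hM hH
  -- basic orthogonality facts
  have hTinv : ∀ t, (T t)⁻¹ = (T t)ᵀ := fun t => Matrix.inv_eq_right_inv (hTorth t)
  have hTT : ∀ t, (T t)ᵀ * T t = 1 := fun t => mul_eq_one_comm.mp (hTorth t)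
  -- antisymmetry of Ṫ Tᵀ
  have hanti : ∀ t i j, (matDeriv T t * (T t)ᵀ) i j + (matDeriv T t * (T t)ᵀ) j i = 0 := by
    intro t i j
    have hconst : (fun s => ∑ l, T s i l * T s j l)
        = fun _ : ℝ => (1 : Matrix (Fin 3) (Fin 3) ℝ) i j := by
      funext s
      rw [← hTorth s]
      simp [Matrix.mul_apply]
    have hder : HasDerivAt (fun s => ∑ l, T s i l * T s j l)
        (∑ l, (deriv (fun s => T s i l) t * T t j l + T t i l * deriv (fun s => T s j l) t)) t := by
      apply HasDerivAt.fun_sum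
      intro l _
      exact ((hT i l).differentiableAt.hasDerivAt).mul ((hT j l).differentiableAt.hasDerivAt)
    rw [hconst] at hder
    have h0 := (hasDerivAt_const t ((1 : Matrix (Fin 3) (Fin 3) ℝ) i j)).unique hder
    have hsum : ∑ l, (deriv (fun s => T s i l) t * T t j l
        + T t i l * deriv (fun s => T s j l) t) = 0 := h0.symm
    rw [Finset.sum_add_distrib] at hsum
    simpa [Matrix.mul_apply, matDeriv, mul_comm] using hsum
  -- matDeriv H is diagonal
  have hHd : ∀ t, matDeriv (fun t => Matrix.diagonal fun a => h a t) t
      = Matrix.diagonal (fun a => deriv (h a) t) := by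
    intro t
    ext i j
    by_cases hij : i = j
    · subst hij
      simp [matDeriv, Matrix.diagonal_apply_eq]
    · have hz : (fun s => (Matrix.diagonal fun a => h a s) i j) = fun _ : ℝ => (0 : ℝ) := by
        funext s; simp [Matrix.diagonal_apply_ne _ hij]
      simp [matDeriv, hz, Matrix.diagonal_apply_ne _ hij]
  have auxsym : ∀ (U : Matrix (Fin 3) (Fin 3) ℝ) (d : Fin 3 → ℝ) (i j : Fin 3),
      (U * Matrix.diagonal d * Uᵀ) i j = (U * Matrix.diagonal d * Uᵀ) j i := by
    intro U d i j
    have hsy : (U * Matrix.diagonal d * Uᵀ)ᵀ = U * Matrix.diagonal d * Uᵀ := by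
      simp [Matrix.transpose_mul, Matrix.diagonal_transpose, Matrix.mul_assoc]
    conv_lhs => rw [← hsy]
    simp [Matrix.transpose_apply]
  -- symmetry of the second summand of M
  have hsym : ∀ t i j,
      (T t * matDeriv (fun t => Matrix.diagonal fun a => h a t) t
        * (Matrix.diagonal fun a => h a t)⁻¹ * (T t)⁻¹) i j
      = (T t * matDeriv (fun t => Matrix.diagonal fun a => h a t) t
        * (Matrix.diagonal fun a => h a t)⁻¹ * (T t)⁻¹) j i := by
    intro t i j
    rw [hTinv, hHd, Matrix.inv_diagonal, Matrix.mul_assoc (T t),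
      Matrix.diagonal_mul_diagonal]
    exact auxsym _ _ i j
  set N : ℝ → Matrix (Fin 3) (Fin 3) ℝ := fun t =>
    matDeriv T t * (T t)⁻¹ + T t * matDeriv (fun t => Matrix.diagonal fun a => h a t) t
      * (Matrix.diagonal fun a => h a t)⁻¹ * (T t)⁻¹ with hNdef
  -- the entrywise difference
  have hdiff : ∀ t j k, N t k j - N t j k = 2 * (matDeriv T t * (T t)ᵀ) k j := by
    intro t j k
    have h1 : N t k j = (matDeriv T t * (T t)ᵀ) k j
        + (T t * matDeriv (fun t => Matrix.diagonal fun a => h a t) t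
          * (Matrix.diagonal fun a => h a t)⁻¹ * (T t)⁻¹) k j := by
      rw [hNdef]; simp [hTinv]
    have h2 : N t j k = (matDeriv T t * (T t)ᵀ) j k
        + (T t * matDeriv (fun t => Matrix.diagonal fun a => h a t) t
          * (Matrix.diagonal fun a => h a t)⁻¹ * (T t)⁻¹) j k := by
      rw [hNdef]; simp [hTinv]
    have h3 := hsym t j k
    have h4 := hanti t k j
    rw [h1, h2, ← h3]
    linarith
  -- the fderiv computation
  have keyF : ∀ (t : ℝ) (x : Fin 3 → ℝ) (j k : Fin 3),
      fderiv ℝ (fun y =>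
        ((1 / (2 * e)) • (N t *ᵥ (y - fun a => w a t) + fun a => deriv (w a) t) : Fin 3 → ℝ) k)
        x (Pi.single j 1)
      = (1 / (2 * e)) * N t k j := by
    intro t x j k
    have hfun : (fun y : Fin 3 → ℝ =>
        ((1 / (2 * e)) • (N t *ᵥ (y - fun a => w a t) + fun a => deriv (w a) t) : Fin 3 → ℝ) k)
        = fun y => (1 / (2 * e)) * ((∑ i, N t k i * y i)
            + (-(∑ i, N t k i * w i t) + deriv (w k) t)) := by
      funext y
      simp only [Pi.smul_apply, smul_eq_mul, Pi.add_apply, Matrix.mulVec, dotProduct,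
        Pi.sub_apply]
      rw [Finset.sum_congr rfl (fun i _ => mul_sub (N t k i) (y i) (w i t)),
        Finset.sum_sub_distrib]
      ring
    rw [hfun]
    have hd : HasFDerivAt (fun y : Fin 3 → ℝ => ∑ i, N t k i * y i)
        (∑ i, N t k i • ContinuousLinearMap.proj (R := ℝ) (φ := fun _ : Fin 3 => ℝ) i) x := by
      apply HasFDerivAt.fun_sum
      intro i _
      exact ((ContinuousLinearMap.proj (R := ℝ) (φ := fun _ : Fin 3 => ℝ) i).hasFDerivAt).const_mul
        (N t k i)
    have hd2 : HasFDerivAt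
        (fun y : Fin 3 → ℝ => (1 / (2 * e)) * ((∑ i, N t k i * y i)
            + (-(∑ i, N t k i * w i t) + deriv (w k) t)))
        ((1 / (2 * e)) • (∑ i, N t k i • ContinuousLinearMap.proj (R := ℝ)
          (φ := fun _ : Fin 3 => ℝ) i)) x :=
      (hd.add_const _).const_mul _
    rw [hd2.fderiv]
    simp [ContinuousLinearMap.sum_apply, Pi.single_apply, Finset.mul_sum, mul_ite]
  have part1 : ∀ (t : ℝ) (x : Fin 3 → ℝ) (j k : Fin 3),
      fderiv ℝ (fun y =>
        ((1 / (2 * e)) • (N t *ᵥ (y - fun a => w a t) + fun a => deriv (w a) t) : Fin 3 → ℝ) k)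
        x (Pi.single j 1) -
      fderiv ℝ (fun y =>
        ((1 / (2 * e)) • (N t *ᵥ (y - fun a => w a t) + fun a => deriv (w a) t) : Fin 3 → ℝ) j)
        x (Pi.single k 1)
      = (1 / e) * (matDeriv T t * (T t)ᵀ) k j := by
    intro t x j k
    rw [keyF t x j k, keyF t x k j, ← mul_sub, hdiff t j k]
    field_simp
  refine ⟨part1, ?_, ?_⟩
  · intro hz t
    have hB : matDeriv T t * (T t)ᵀ = 0 := by
      ext k j
      have := hz t 0 j k
      rw [part1 t 0 j k] at this
      have h1e : (1 : ℝ) / e ≠ 0 := one_div_ne_zero he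
      simpa [Matrix.zero_apply] using (mul_eq_zero.mp this).resolve_left h1e
    calc matDeriv T t = matDeriv T t * ((T t)ᵀ * T t) := by rw [hTT t, Matrix.mul_one]
      _ = matDeriv T t * (T t)ᵀ * T t := by rw [Matrix.mul_assoc]
      _ = 0 := by rw [hB, Matrix.zero_mul]
  · intro hz t x j k
    rw [part1 t x j k, hz t, Matrix.zero_mul, Matrix.zero_apply, mul_zero]
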